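/- A cycle graph C_k admits an α-labeling (a graceful labeling f with max_A f < min_B f on its bipartition) only if k ≡ 0 (mod 4). -/

import Mathlib

/-- The set of absolute differences of labels along the edges of a graph. -/
def diffSet {V : Type*} (G : SimpleGraph V) (f : V → ℕ) : Set ℕ :=
  {n | ∃ u v, G.Adj u v ∧ ((f u : ℤ) - (f v : ℤ)).natAbs = n}

/-- if the cycle `C_k` (`k ≥ 3`) admits an `α`-labeling
(a graceful labeling `f` with `max_A f < min_B f` on a bipartition `A`, `B`),
then `k ≡ 0 (mod 4)`. -/
theorem stmt_7 (k : ℕ) (hk : 3 ≤ k)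
    (h : ∃ (A : Set (Fin k)) (f : Fin k → ℕ),
      (∀ u v, (SimpleGraph.cycleGraph k).Adj u v → (u ∈ A ↔ v ∉ A)) ∧
      Function.Injective f ∧
      (∀ v, f v ≤ k) ∧
      diffSet (SimpleGraph.cycleGraph k) f = ↑(Finset.Icc 1 k) ∧
      ((∀ a ∈ A, ∀ b ∉ A, f a < f b) ∨ (∀ a ∈ A, ∀ b ∉ A, f b < f a))) :
    4 ∣ k := by
  classical
  obtain ⟨m, rfl⟩ : ∃ m, k = m + 3 := ⟨k - 3, by omega⟩
  obtain ⟨A, f, hbip, hinj, hle, hdiff, -⟩ := h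
  -- adjacency of consecutive vertices
  open Fin.CommRing in
  have hadj : ∀ i : Fin (m + 3), (SimpleGraph.cycleGraph (m + 3)).Adj i (i + 1) := by
    intro i
    exact (SimpleGraph.cycleGraph_adj (n := m + 1)).mpr (Or.inr (by ring))
  -- Step 1: k is even
  open Fin.NatCast Fin.CommRing in
  have hEven : Even (m + 3) := by
    have key : ∀ n : ℕ,
        ((n : Fin (m + 3)) ∈ A ↔ ((0 : Fin (m + 3)) ∈ A ↔ Even n)) := by
      intro n
      induction n with
      | zero => simp
      | succ n ih =>
        have h1 := hbip _ _ (hadj (n : Fin (m + 3)))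
        have h2 : Even (n + 1) ↔ ¬ Even n := Nat.even_add_one
        push_cast
        tauto
    have := key (m + 3)
    rw [Fin.natCast_self] at this
    tauto
  -- Step 2: the differences along consecutive edges
  set d : Fin (m + 3) → ℕ := fun i => ((f (i + 1) : ℤ) - (f i : ℤ)).natAbs with hd
  open Fin.CommRing in
  have hmem : ∀ n ∈ Finset.Icc 1 (m + 3), ∃ i, d i = n := by
    intro n hn
    have : n ∈ diffSet (SimpleGraph.cycleGraph (m + 3)) f := by
      rw [hdiff]; exact_mod_cast hn
    obtain ⟨u, v, huv, hne⟩ := this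
    rcases (SimpleGraph.cycleGraph_adj (n := m + 1)).mp huv with h1 | h1
    · have huv' : u = v + 1 := by rw [← h1]; ring
      subst huv'
      exact ⟨v, by simp only [hd]; exact hne⟩
    · have huv' : v = u + 1 := by rw [← h1]; ring
      subst huv'
      refine ⟨u, ?_⟩
      simp only [hd]
      rw [← hne, ← Int.natAbs_neg, neg_sub]
  have hsub : Finset.Icc 1 (m + 3) ⊆ Finset.univ.image d := by
    intro n hn
    obtain ⟨i, hi⟩ := hmem n hn
    exact Finset.mem_image.2 ⟨i, Finset.mem_univ i, hi⟩
  have hcard : (Finset.univ.image d).card = m + 3 := by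
    have h1 : (Finset.univ.image d).card ≤ m + 3 := by
      calc (Finset.univ.image d).card ≤ (Finset.univ : Finset (Fin (m + 3))).card :=
            Finset.card_image_le
        _ = m + 3 := by simp
    have h2 : m + 3 ≤ (Finset.univ.image d).card := by
      calc m + 3 = (Finset.Icc 1 (m + 3)).card := by simp
        _ ≤ _ := Finset.card_le_card hsub
    omega
  have himg : Finset.univ.image d = Finset.Icc 1 (m + 3) :=
    (Finset.eq_of_subset_of_card_le hsub (by simp [hcard])).symm
  have hinjOn : Set.InjOn d (Finset.univ : Finset (Fin (m + 3))) := by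
    rw [← Finset.card_image_iff]
    simp [hcard]
  have hsum : ∑ i : Fin (m + 3), d i = ∑ n ∈ Finset.Icc 1 (m + 3), n := by
    rw [← himg, Finset.sum_image fun a ha b hb hab => hinjOn ha hb hab]
  -- parity of the sum
  have habs : ∀ x : ℤ, ((x.natAbs : ZMod 2)) = ((x : ZMod 2)) := by
    intro x
    rcases Int.natAbs_eq x with hx | hx
    · conv_rhs => rw [hx]
      rw [Int.cast_natCast]
    · conv_rhs => rw [hx]
      rw [Int.cast_neg, Int.cast_natCast, CharTwo.neg_eq]
  have hstep : ∀ i : Fin (m + 3),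
      ((d i : ZMod 2)) = (f (i + 1) : ZMod 2) + (f i : ZMod 2) := by
    intro i
    simp only [hd]
    rw [habs]
    push_cast
    rw [CharTwo.sub_eq_add]
  have hshift : (∑ i : Fin (m + 3), (f (i + 1) : ZMod 2)) =
      ∑ i : Fin (m + 3), (f i : ZMod 2) :=
    Fintype.sum_equiv (Equiv.addRight (1 : Fin (m + 3))) _ _ (fun i => rfl)
  have hpar : ((∑ i : Fin (m + 3), d i : ℕ) : ZMod 2) = 0 := by
    rw [Nat.cast_sum]
    calc (∑ i : Fin (m + 3), ((d i : ZMod 2)))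
        = ∑ i : Fin (m + 3), ((f (i + 1) : ZMod 2) + (f i : ZMod 2)) :=
          Finset.sum_congr rfl fun i _ => hstep i
      _ = (∑ i : Fin (m + 3), (f (i + 1) : ZMod 2))
            + ∑ i : Fin (m + 3), (f i : ZMod 2) := Finset.sum_add_distrib
      _ = 0 := by rw [hshift, CharTwo.add_self_eq_zero]
  have hdvd2 : 2 ∣ ∑ n ∈ Finset.Icc 1 (m + 3), n := by
    rw [← hsum]
    exact (ZMod.natCast_eq_zero_iff _ 2).1 hpar
  -- Gauss sum
  have hgauss : (∑ n ∈ Finset.Icc 1 (m + 3), n) * 2 = (m + 3) * (m + 4) := by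
    have hins : Finset.range (m + 4) = insert 0 (Finset.Icc 1 (m + 3)) := by
      ext x; simp; omega
    have := Finset.sum_range_id_mul_two (m + 4)
    rw [hins, Finset.sum_insert (by simp)] at this
    simpa [Nat.mul_comm] using this
  -- conclude
  obtain ⟨s, hs⟩ := hdvd2
  obtain ⟨t, ht⟩ := hEven
  have h1 : (m + 3) * (m + 4) = 4 * s := by rw [← hgauss, hs]; ring
  have h2 : 2 * (t * (m + 4)) = 4 * s := by
    calc 2 * (t * (m + 4)) = (t + t) * (m + 4) := by ring
      _ = (m + 3) * (m + 4) := by rw [← ht]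
      _ = 4 * s := h1
  have h3 : Even (t * (m + 4)) := ⟨s, by omega⟩
  rcases Nat.even_mul.1 h3 with he | he
  · obtain ⟨u, hu⟩ := he
    exact ⟨u, by omega⟩
  · obtain ⟨u, hu⟩ := he
    omega
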